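/- Let N_r ≥ 2 be an integer, set n = 2N_r, and define G_{n,k}(u) = ∑_{i=0}^{k−1} [n!·C(k−1,i)·(−1)^i / ((n−k+i+1)·(n−k)!·(k−1)!)] · u^{n−k+i+1}. Define Q_SRS(u) = [(N_r−1)/(2N_r−1)]·G_{n,2}(u) + [(N_r+1)/(2(2N_r−1))]·G_{n,3}(u) + ∑_{k=4}^{N_r+1} [2·N_r·C(N_r,k−1)/((2N_r−(k−1))·C(2N_r,k−1))]·G_{n,k}(u) + ∑_{k=4}^{N_r+2} [2·(N_r−1)·C(N_r,k−2)/((2N_r−(k−2))·(2N_r−(k−1))·C(2N_r,k−2))]·G_{n,k}(u). Then lim_{u→0⁺} Q_SRS(u)/u^{N_r−1} = 2/(N_r+1). -/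

import Mathlib

open Filter Finset

/-- `G n k u = ∑_{i=0}^{k−1} n!·C(k−1,i)·(−1)^i / ((n−k+i+1)(n−k)!(k−1)!) · u^{n−k+i+1}`,
the CDF of the `k`-th largest of `n` i.i.d. random variables expressed as a
polynomial in the common per-entry CDF value `u`. -/
noncomputable def orderCDF (n k : ℕ) (u : ℝ) : ℝ :=
  ∑ i ∈ Finset.range k,
    ((n.factorial : ℝ) * (((k - 1).choose i : ℝ)) * (-1 : ℝ) ^ i
        / (((n : ℝ) - (k : ℝ) + (i : ℝ) + 1) * ((n - k).factorial : ℝ)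
            * ((k - 1).factorial : ℝ)))
      * u ^ (n - k + i + 1)

lemma mono_div_tendsto (c : ℝ) (a m : ℕ) (h : m ≤ a) :
    Filter.Tendsto (fun u : ℝ => c * u ^ a / u ^ m) (nhdsWithin 0 (Set.Ioi 0))
      (nhds (if a = m then c else 0)) := by
  have key : Filter.Tendsto (fun u : ℝ => c * u ^ (a - m)) (nhdsWithin 0 (Set.Ioi 0))
      (nhds (c * (0 : ℝ) ^ (a - m))) :=
    ((continuous_const.mul (continuous_pow (a - m))).tendsto 0).mono_left nhdsWithin_le_nhds
  have hev : (fun u : ℝ => c * u ^ (a - m)) =ᶠ[nhdsWithin 0 (Set.Ioi 0)]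
      (fun u : ℝ => c * u ^ a / u ^ m) := by
    filter_upwards [self_mem_nhdsWithin] with u hu
    have hu0 : u ≠ 0 := ne_of_gt hu
    rw [pow_sub₀ u hu0 h, mul_div_assoc, div_eq_mul_inv]
  have H := key.congr' hev
  rcases eq_or_ne a m with rfl | hne
  · simpa using H
  · have hd : a - m ≠ 0 := by omega
    rw [if_neg hne]
    simpa [zero_pow hd] using H

lemma orderCDF_div_tendsto (n k m : ℕ) (hk : 1 ≤ k) (hm : m ≤ n - k + 1) :
    Filter.Tendsto (fun u : ℝ => orderCDF n k u / u ^ m) (nhdsWithin 0 (Set.Ioi 0))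
      (nhds (if n - k + 1 = m then
          (n.factorial : ℝ) / (((n : ℝ) - (k : ℝ) + 1) * ((n - k).factorial : ℝ)
            * ((k - 1).factorial : ℝ)) else 0)) := by
  set c : ℕ → ℝ := fun i =>
    (n.factorial : ℝ) * (((k - 1).choose i : ℝ)) * (-1 : ℝ) ^ i
      / (((n : ℝ) - (k : ℝ) + (i : ℝ) + 1) * ((n - k).factorial : ℝ)
          * ((k - 1).factorial : ℝ)) with hc
  have key : Filter.Tendsto
      (fun u : ℝ => ∑ i ∈ Finset.range k, c i * u ^ (n - k + i + 1) / u ^ m)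
      (nhdsWithin 0 (Set.Ioi 0))
      (nhds (∑ i ∈ Finset.range k, if n - k + i + 1 = m then c i else 0)) := by
    apply tendsto_finset_sum
    intro i _
    exact mono_div_tendsto (c i) _ m (by omega)
  have hfun : (fun u : ℝ => orderCDF n k u / u ^ m)
      = fun u : ℝ => ∑ i ∈ Finset.range k, c i * u ^ (n - k + i + 1) / u ^ m := by
    funext u
    rw [orderCDF, Finset.sum_div]
  rw [hfun]
  convert key using 2
  by_cases h : n - k + 1 = m
  · rw [if_pos h, Finset.sum_eq_single 0]
    · rw [if_pos (by omega)]
      simp [hc]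
    · intro i _ hi
      rw [if_neg (by omega)]
    · intro h0
      exact absurd (Finset.mem_range.mpr (by omega)) h0
  · rw [if_neg h]
    symm
    apply Finset.sum_eq_zero
    intro i _
    rw [if_neg (by omega)]

lemma orderCDF_div_tendsto_zero (n k m : ℕ) (hk : 1 ≤ k) (hm : m < n - k + 1) :
    Filter.Tendsto (fun u : ℝ => orderCDF n k u / u ^ m) (nhdsWithin 0 (Set.Ioi 0))
      (nhds 0) := by
  have h := orderCDF_div_tendsto n k m hk hm.le
  rwa [if_neg (by omega)] at h

lemma orderCDF_div_tendsto_eq (n k m : ℕ) (hk : 1 ≤ k) (hm : m = n - k + 1) :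
    Filter.Tendsto (fun u : ℝ => orderCDF n k u / u ^ m) (nhdsWithin 0 (Set.Ioi 0))
      (nhds ((n.factorial : ℝ) / (((n : ℝ) - (k : ℝ) + 1) * ((n - k).factorial : ℝ)
            * ((k - 1).factorial : ℝ)))) := by
  have h := orderCDF_div_tendsto n k m hk hm.le
  rwa [if_pos hm.symm] at h

lemma srs_aux (x C F : ℝ) (hC : C ≠ 0) (hF : F ≠ 0) (hx : (0:ℝ) ≤ x) :
    2 * (x + 2 - 1) * 1 /
        ((2 * (x + 2) - (x + 4 - 2)) * (2 * (x + 2) - (x + 4 - 1)) * C) *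
      (C * ((x + 2) * (x + 1) * F) * ((x + 2) * (x + 1) * F) /
        ((2 * (x + 2) - (x + 4) + 1) * F * ((x + 3) * ((x + 2) * (x + 1) * F)))) =
    2 / (x + 2 + 1) := by
  have r1 : 2 * (x + 2) - (x + 4 - 2) = x + 2 := by ring
  have r2 : 2 * (x + 2) - (x + 4 - 1) = x + 1 := by ring
  have r3 : 2 * (x + 2) - (x + 4) + 1 = x + 1 := by ring
  have h1 : x + 1 ≠ 0 := by positivity
  have h2 : x + 2 ≠ 0 := by positivity
  have h3 : x + 3 ≠ 0 := by positivity
  rw [r1, r2, r3]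
  field_simp
  ring

/-- For `Nr ≥ 2`, the two-user SRS outage bound
`Q_SRS(u) = (Nr−1)/(2Nr−1)·G_{2Nr,2}(u) + (Nr+1)/(2(2Nr−1))·G_{2Nr,3}(u)
  + ∑_{k=4}^{Nr+1} 2·Nr·C(Nr,k−1)/((2Nr−(k−1))·C(2Nr,k−1))·G_{2Nr,k}(u)
  + ∑_{k=4}^{Nr+2} 2·(Nr−1)·C(Nr,k−2)/((2Nr−(k−2))·(2Nr−(k−1))·C(2Nr,k−2))·G_{2Nr,k}(u)`
satisfies `lim_{u→0⁺} Q_SRS(u)/u^{Nr−1} = 2/(Nr+1)`. -/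
theorem SRS_outage_bound_limit (Nr : ℕ) (hNr : 2 ≤ Nr) :
    Filter.Tendsto
      (fun u : ℝ =>
        (((Nr : ℝ) - 1) / (2 * (Nr : ℝ) - 1) * orderCDF (2 * Nr) 2 u
          + ((Nr : ℝ) + 1) / (2 * (2 * (Nr : ℝ) - 1)) * orderCDF (2 * Nr) 3 u
          + ∑ k ∈ Finset.Icc 4 (Nr + 1),
              (2 * (Nr : ℝ) * (Nr.choose (k - 1) : ℝ))
                / ((2 * (Nr : ℝ) - ((k : ℝ) - 1)) * (((2 * Nr).choose (k - 1) : ℝ)))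
                * orderCDF (2 * Nr) k u
          + ∑ k ∈ Finset.Icc 4 (Nr + 2),
              (2 * ((Nr : ℝ) - 1) * (Nr.choose (k - 2) : ℝ))
                / ((2 * (Nr : ℝ) - ((k : ℝ) - 2)) * (2 * (Nr : ℝ) - ((k : ℝ) - 1))
                    * (((2 * Nr).choose (k - 2) : ℝ)))
                * orderCDF (2 * Nr) k u) / u ^ (Nr - 1))
      (nhdsWithin 0 (Set.Ioi 0)) (nhds (2 / ((Nr : ℝ) + 1))) := by
  obtain ⟨M, rfl⟩ : ∃ M, Nr = M + 2 := ⟨Nr - 2, by omega⟩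
  set L := nhdsWithin (0 : ℝ) (Set.Ioi 0) with hL
  -- piece 1
  have h1 : Filter.Tendsto (fun u : ℝ =>
      (((M + 2 : ℕ) : ℝ) - 1) / (2 * ((M + 2 : ℕ) : ℝ) - 1)
        * (orderCDF (2 * (M + 2)) 2 u / u ^ (M + 2 - 1))) L (nhds 0) := by
    simpa only [mul_zero] using (orderCDF_div_tendsto_zero (2 * (M + 2)) 2 (M + 2 - 1)
      (by omega) (by omega)).const_mul ((((M + 2 : ℕ) : ℝ) - 1) / (2 * ((M + 2 : ℕ) : ℝ) - 1))
  -- piece 2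
  have h2 : Filter.Tendsto (fun u : ℝ =>
      (((M + 2 : ℕ) : ℝ) + 1) / (2 * (2 * ((M + 2 : ℕ) : ℝ) - 1))
        * (orderCDF (2 * (M + 2)) 3 u / u ^ (M + 2 - 1))) L (nhds 0) := by
    simpa only [mul_zero] using (orderCDF_div_tendsto_zero (2 * (M + 2)) 3 (M + 2 - 1)
      (by omega) (by omega)).const_mul
      ((((M + 2 : ℕ) : ℝ) + 1) / (2 * (2 * ((M + 2 : ℕ) : ℝ) - 1)))
  -- piece 3
  have h3 : Filter.Tendsto (fun u : ℝ =>
      ∑ k ∈ Finset.Icc 4 (M + 2 + 1),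
        (2 * ((M + 2 : ℕ) : ℝ) * (((M + 2)).choose (k - 1) : ℝ))
          / ((2 * ((M + 2 : ℕ) : ℝ) - ((k : ℝ) - 1)) * (((2 * (M + 2)).choose (k - 1) : ℝ)))
          * (orderCDF (2 * (M + 2)) k u / u ^ (M + 2 - 1))) L (nhds 0) := by
    have h := tendsto_finset_sum (Finset.Icc 4 (M + 2 + 1))
      (f := fun k => fun u : ℝ =>
        (2 * ((M + 2 : ℕ) : ℝ) * (((M + 2)).choose (k - 1) : ℝ))
          / ((2 * ((M + 2 : ℕ) : ℝ) - ((k : ℝ) - 1)) * (((2 * (M + 2)).choose (k - 1) : ℝ)))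
          * (orderCDF (2 * (M + 2)) k u / u ^ (M + 2 - 1)))
      (a := fun _ => (0 : ℝ)) (fun k hk => by
        rw [Finset.mem_Icc] at hk
        simpa only [mul_zero] using (orderCDF_div_tendsto_zero (2 * (M + 2)) k (M + 2 - 1)
          (by omega) (by omega)).const_mul
          ((2 * ((M + 2 : ℕ) : ℝ) * (((M + 2)).choose (k - 1) : ℝ))
            / ((2 * ((M + 2 : ℕ) : ℝ) - ((k : ℝ) - 1)) * (((2 * (M + 2)).choose (k - 1) : ℝ)))))
    simpa only [Finset.sum_const_zero] using h
  -- piece 4a : lower part of second sum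
  have h4a : Filter.Tendsto (fun u : ℝ =>
      ∑ k ∈ Finset.Icc 4 (M + 3),
        (2 * (((M + 2 : ℕ) : ℝ) - 1) * (((M + 2)).choose (k - 2) : ℝ))
          / ((2 * ((M + 2 : ℕ) : ℝ) - ((k : ℝ) - 2)) * (2 * ((M + 2 : ℕ) : ℝ) - ((k : ℝ) - 1))
              * (((2 * (M + 2)).choose (k - 2) : ℝ)))
          * (orderCDF (2 * (M + 2)) k u / u ^ (M + 2 - 1))) L (nhds 0) := by
    have h := tendsto_finset_sum (Finset.Icc 4 (M + 3))
      (f := fun k => fun u : ℝ =>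
        (2 * (((M + 2 : ℕ) : ℝ) - 1) * (((M + 2)).choose (k - 2) : ℝ))
          / ((2 * ((M + 2 : ℕ) : ℝ) - ((k : ℝ) - 2)) * (2 * ((M + 2 : ℕ) : ℝ) - ((k : ℝ) - 1))
              * (((2 * (M + 2)).choose (k - 2) : ℝ)))
          * (orderCDF (2 * (M + 2)) k u / u ^ (M + 2 - 1)))
      (a := fun _ => (0 : ℝ)) (fun k hk => by
        rw [Finset.mem_Icc] at hk
        simpa only [mul_zero] using (orderCDF_div_tendsto_zero (2 * (M + 2)) k (M + 2 - 1)
          (by omega) (by omega)).const_mul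
          ((2 * (((M + 2 : ℕ) : ℝ) - 1) * (((M + 2)).choose (k - 2) : ℝ))
            / ((2 * ((M + 2 : ℕ) : ℝ) - ((k : ℝ) - 2)) * (2 * ((M + 2 : ℕ) : ℝ) - ((k : ℝ) - 1))
                * (((2 * (M + 2)).choose (k - 2) : ℝ)))))
    simpa only [Finset.sum_const_zero] using h
  -- piece 4b : top term
  have hval : (2 * (((M + 2 : ℕ) : ℝ) - 1) * (((M + 2)).choose (M + 4 - 2) : ℝ))
        / ((2 * ((M + 2 : ℕ) : ℝ) - (((M + 4 : ℕ) : ℝ) - 2))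
            * (2 * ((M + 2 : ℕ) : ℝ) - (((M + 4 : ℕ) : ℝ) - 1))
            * (((2 * (M + 2)).choose (M + 4 - 2) : ℝ)))
      * (((2 * (M + 2)).factorial : ℝ)
          / (((((2 * (M + 2) : ℕ)) : ℝ) - (((M + 4 : ℕ)) : ℝ) + 1)
              * (((2 * (M + 2) - (M + 4)).factorial : ℝ))
              * ((((M + 4 - 1)).factorial : ℝ))))
      = 2 / (((M + 2 : ℕ) : ℝ) + 1) := by
    have e1 : M + 4 - 2 = M + 2 := by omega
    have e2 : 2 * (M + 2) - (M + 4) = M := by omega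
    have e3 : M + 4 - 1 = M + 3 := by omega
    rw [e1, e2, e3, Nat.choose_self]
    have hchN : (2 * (M + 2)).choose (M + 2) * (M + 2).factorial * (M + 2).factorial
        = (2 * (M + 2)).factorial := by
      have h := Nat.choose_mul_factorial_mul_factorial (show M + 2 ≤ 2 * (M + 2) by omega)
      rwa [show 2 * (M + 2) - (M + 2) = M + 2 by omega] at h
    have hch : (((2 * (M + 2)).choose (M + 2) : ℝ)) * ((M + 2).factorial : ℝ)
        * ((M + 2).factorial : ℝ) = ((2 * (M + 2)).factorial : ℝ) := by
      exact_mod_cast congrArg (fun t : ℕ => (t : ℝ)) hchN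
    rw [← hch]
    have hf2 : ((M + 2).factorial : ℝ) = ((M : ℝ) + 2) * ((M : ℝ) + 1) * (M.factorial : ℝ) := by
      have h : (M + 2).factorial = (M + 2) * ((M + 1) * M.factorial) := rfl
      rw [h]; push_cast; ring
    have hf3 : ((M + 3).factorial : ℝ)
        = ((M : ℝ) + 3) * (((M : ℝ) + 2) * ((M : ℝ) + 1) * (M.factorial : ℝ)) := by
      have h : (M + 3).factorial = (M + 3) * (M + 2).factorial := rfl
      rw [h]; push_cast [hf2]; ring
    have hch0 : ((2 * (M + 2)).choose (M + 2) : ℝ) ≠ 0 := by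
      have : (0 : ℝ) < ((2 * (M + 2)).choose (M + 2) : ℝ) := by
        exact_mod_cast Nat.choose_pos (show M + 2 ≤ 2 * (M + 2) by omega)
      exact ne_of_gt this
    have hf0 : (M.factorial : ℝ) ≠ 0 := by
      have : (0 : ℝ) < (M.factorial : ℝ) := by exact_mod_cast M.factorial_pos
      exact ne_of_gt this
    rw [hf2, hf3]
    push_cast
    exact srs_aux (M : ℝ) _ _ hch0 hf0 (Nat.cast_nonneg M)
  have h4b : Filter.Tendsto (fun u : ℝ =>
      (2 * (((M + 2 : ℕ) : ℝ) - 1) * (((M + 2)).choose (M + 4 - 2) : ℝ))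
        / ((2 * ((M + 2 : ℕ) : ℝ) - (((M + 4 : ℕ) : ℝ) - 2))
            * (2 * ((M + 2 : ℕ) : ℝ) - (((M + 4 : ℕ) : ℝ) - 1))
            * (((2 * (M + 2)).choose (M + 4 - 2) : ℝ)))
        * (orderCDF (2 * (M + 2)) (M + 4) u / u ^ (M + 2 - 1))) L
      (nhds (2 / (((M + 2 : ℕ) : ℝ) + 1))) := by
    have htop := (orderCDF_div_tendsto_eq (2 * (M + 2)) (M + 4) (M + 2 - 1)
      (by omega) (by omega)).const_mul
      ((2 * (((M + 2 : ℕ) : ℝ) - 1) * (((M + 2)).choose (M + 4 - 2) : ℝ))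
        / ((2 * ((M + 2 : ℕ) : ℝ) - (((M + 4 : ℕ) : ℝ) - 2))
            * (2 * ((M + 2 : ℕ) : ℝ) - (((M + 4 : ℕ) : ℝ) - 1))
            * (((2 * (M + 2)).choose (M + 4 - 2) : ℝ))))
    convert htop using 2
    exact hval.symm
  -- piece 4 : second sum
  have h4 : Filter.Tendsto (fun u : ℝ =>
      ∑ k ∈ Finset.Icc 4 (M + 2 + 2),
        (2 * (((M + 2 : ℕ) : ℝ) - 1) * (((M + 2)).choose (k - 2) : ℝ))
          / ((2 * ((M + 2 : ℕ) : ℝ) - ((k : ℝ) - 2)) * (2 * ((M + 2 : ℕ) : ℝ) - ((k : ℝ) - 1))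
              * (((2 * (M + 2)).choose (k - 2) : ℝ)))
          * (orderCDF (2 * (M + 2)) k u / u ^ (M + 2 - 1))) L
      (nhds (0 + 2 / (((M + 2 : ℕ) : ℝ) + 1))) := by
    have heq : (fun u : ℝ =>
        ∑ k ∈ Finset.Icc 4 (M + 2 + 2),
          (2 * (((M + 2 : ℕ) : ℝ) - 1) * (((M + 2)).choose (k - 2) : ℝ))
            / ((2 * ((M + 2 : ℕ) : ℝ) - ((k : ℝ) - 2)) * (2 * ((M + 2 : ℕ) : ℝ) - ((k : ℝ) - 1))
                * (((2 * (M + 2)).choose (k - 2) : ℝ)))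
            * (orderCDF (2 * (M + 2)) k u / u ^ (M + 2 - 1)))
        = fun u : ℝ =>
          (∑ k ∈ Finset.Icc 4 (M + 3),
            (2 * (((M + 2 : ℕ) : ℝ) - 1) * (((M + 2)).choose (k - 2) : ℝ))
              / ((2 * ((M + 2 : ℕ) : ℝ) - ((k : ℝ) - 2)) * (2 * ((M + 2 : ℕ) : ℝ) - ((k : ℝ) - 1))
                  * (((2 * (M + 2)).choose (k - 2) : ℝ)))
              * (orderCDF (2 * (M + 2)) k u / u ^ (M + 2 - 1)))
          + (2 * (((M + 2 : ℕ) : ℝ) - 1) * (((M + 2)).choose (M + 4 - 2) : ℝ))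
              / ((2 * ((M + 2 : ℕ) : ℝ) - (((M + 4 : ℕ) : ℝ) - 2))
                  * (2 * ((M + 2 : ℕ) : ℝ) - (((M + 4 : ℕ) : ℝ) - 1))
                  * (((2 * (M + 2)).choose (M + 4 - 2) : ℝ)))
              * (orderCDF (2 * (M + 2)) (M + 4) u / u ^ (M + 2 - 1)) :=
      funext fun u => Finset.sum_Icc_succ_top (by omega) _
    rw [heq]
    exact h4a.add h4b
  have key := ((h1.add h2).add h3).add h4
  simp only [add_zero, zero_add] at key
  refine key.congr fun u => ?_
  symm
  rw [add_div, add_div, add_div, mul_div_assoc, mul_div_assoc,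
    Finset.sum_div, Finset.sum_div]
  congr 1
  · congr 1
    exact Finset.sum_congr rfl fun k _ => mul_div_assoc _ _ _
  · exact Finset.sum_congr rfl fun k _ => mul_div_assoc _ _ _
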